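/- Let α ∈ (0,1], λ > 0, c > 0 and t > 0. Then (1/(2π)) ∑_{k=1}^∞ (λ/c^α)^k (1/Γ(αk)) ∬_{{(x,y) : x²+y² < c²t²}} (c²t² - x² - y²)^{αk/2 - 1} dx dy = E_{α,1}(λ t^α) - 1. Consequently, the absolutely continuous component of the law of the fractional planar random motion, obtained by dividing this density by E_{α,1}(λ t^α), has total mass 1 - 1/E_{α,1}(λ t^α) over the disc of radius ct. -/

import Mathlib

open Real MeasureTheory Set

open Real MeasureTheory Set

lemma ioo_image (R : ℝ) (hR : 0 < R) :
    (fun r : ℝ => R^2 - r^2) '' Ioo 0 R = Ioo 0 (R^2) := by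
  ext u
  simp only [mem_image, mem_Ioo]
  constructor
  · rintro ⟨r, ⟨hr0, hrR⟩, rfl⟩
    constructor
    · nlinarith
    · nlinarith
  · rintro ⟨hu0, huR⟩
    refine ⟨Real.sqrt (R^2 - u), ⟨Real.sqrt_pos.2 (by linarith), ?_⟩, ?_⟩
    · have : R^2 - u < R^2 := by linarith
      calc √(R^2-u) < √(R^2) := Real.sqrt_lt_sqrt (by linarith) this
        _ = R := Real.sqrt_sq hR.le
    · rw [Real.sq_sqrt (by linarith)]; ring

lemma radial_integral (R s : ℝ) (hR : 0 < R) (hs : 0 < s) :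
    ∫ r in Ioo 0 R, r * (R^2 - r^2) ^ (s - 1) = (R^2) ^ s / (2*s) := by
  have h := integral_image_eq_integral_abs_deriv_smul (f := fun r : ℝ => R^2 - r^2)
    (f' := fun r => -2*r) (s := Ioo 0 R) measurableSet_Ioo
    (fun x hx => (((hasDerivAt_pow 2 x).const_sub (R^2)).congr_deriv (by
      simp)).hasDerivWithinAt)
    (fun x hx y hy hxy => by
      simp only [mem_Ioo] at hx hy
      simp only [sub_right_inj] at hxy
      nlinarith [hx.1, hy.1, sq_abs x, sq_abs y])
    (fun u => u ^ (s - 1))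
  rw [ioo_image R hR] at h
  have h2 : ∫ u in Ioo 0 (R^2), u ^ (s-1) = (R^2)^s / s := by
    rw [← integral_Ioc_eq_integral_Ioo, ← _root_.intervalIntegral.integral_of_le (by positivity : (0:ℝ) ≤ R^2)]
    rw [integral_rpow (Or.inl (by linarith))]
    rw [Real.zero_rpow (by linarith), sub_add_cancel]
    ring
  rw [h2] at h
  rw [show ∫ x in Ioo 0 R, |(-2*x)| • (R^2 - x^2) ^ (s-1)
      = 2 * ∫ r in Ioo 0 R, r * (R^2 - r^2) ^ (s - 1) by
    rw [← integral_const_mul]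
    apply setIntegral_congr_fun measurableSet_Ioo
    intro x hx
    simp only [smul_eq_mul]
    rw [abs_of_nonpos (by nlinarith [hx.1] : -2*x ≤ 0)]
    ring] at h
  field_simp at h ⊢
  linarith


lemma disc_integral (R s : ℝ) (hR : 0 < R) (hs : 0 < s) :
    (∫ p in {p : ℝ × ℝ | p.1 ^ 2 + p.2 ^ 2 < R ^ 2},
      (R ^ 2 - p.1 ^ 2 - p.2 ^ 2) ^ (s - 1)) = π * (R^2) ^ s / s := by
  have hSmeas : MeasurableSet {p : ℝ × ℝ | p.1 ^ 2 + p.2 ^ 2 < R ^ 2} := by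
    apply measurableSet_lt <;> fun_prop
  set g : ℝ × ℝ → ℝ := fun p => (R ^ 2 - p.1 ^ 2 - p.2 ^ 2) ^ (s - 1) with hg
  have step1 : (∫ p in {p : ℝ × ℝ | p.1 ^ 2 + p.2 ^ 2 < R ^ 2}, g p)
      = ∫ p, ({p : ℝ × ℝ | p.1 ^ 2 + p.2 ^ 2 < R ^ 2}).indicator g p := by
    rw [integral_indicator hSmeas]
  have step2 := integral_comp_polarCoord_symm
    (({p : ℝ × ℝ | p.1 ^ 2 + p.2 ^ 2 < R ^ 2}).indicator g)
  -- integrand over target equals product function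
  have step3 : (∫ p in polarCoord.target,
        p.1 • ({p : ℝ × ℝ | p.1 ^ 2 + p.2 ^ 2 < R ^ 2}).indicator g (polarCoord.symm p))
      = ∫ p in (Ioi (0:ℝ)) ×ˢ (Ioo (-π) π),
        ((Ioo (0:ℝ) R).indicator (fun r => r * (R^2 - r^2)^(s-1)) p.1) * (1:ℝ) := by
    rw [polarCoord_target]
    apply setIntegral_congr_fun (measurableSet_Ioi.prod measurableSet_Ioo)
    intro p hp
    obtain ⟨hp1, hp2⟩ := hp
    simp only [mem_Ioi] at hp1
    have hsymm : polarCoord.symm p = (p.1 * cos p.2, p.1 * sin p.2) := rfl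
    have hsq : (p.1 * cos p.2)^2 + (p.1 * sin p.2)^2 = p.1^2 := by
      have := sin_sq_add_cos_sq p.2; nlinarith
    dsimp only
    rw [hsymm]
    by_cases hlt : p.1 < R
    · rw [indicator_of_mem (by simp only [mem_setOf_eq]; nlinarith : ((p.1 * cos p.2, p.1 * sin p.2) : ℝ × ℝ) ∈ {p : ℝ × ℝ | p.1 ^ 2 + p.2 ^ 2 < R ^ 2}),
        indicator_of_mem (mem_Ioo.2 ⟨hp1, hlt⟩)]
      simp only [hg, smul_eq_mul]
      rw [show R ^ 2 - (p.1 * cos p.2) ^ 2 - (p.1 * sin p.2) ^ 2 = R^2 - p.1^2 by nlinarith]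
      ring
    · push_neg at hlt
      rw [indicator_of_notMem (by simp only [mem_setOf_eq, not_lt]; nlinarith : ((p.1 * cos p.2, p.1 * sin p.2) : ℝ × ℝ) ∉ {p : ℝ × ℝ | p.1 ^ 2 + p.2 ^ 2 < R ^ 2}),
        indicator_of_notMem (by simp [mem_Ioo, hlt, not_lt])]
      simp
  have step4 : (∫ p in (Ioi (0:ℝ)) ×ˢ (Ioo (-π) π),
        ((Ioo (0:ℝ) R).indicator (fun r => r * (R^2 - r^2)^(s-1)) p.1) * (1:ℝ))
      = (∫ r in Ioi (0:ℝ), (Ioo (0:ℝ) R).indicator (fun r => r * (R^2 - r^2)^(s-1)) r)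
        * ∫ θ in Ioo (-π) π, (1:ℝ) := by
    rw [Measure.volume_eq_prod]
    exact setIntegral_prod_mul (L := ℝ) ((Ioo (0:ℝ) R).indicator (fun r => r * (R^2 - r^2)^(s-1))) (fun _ => (1:ℝ)) _ _
  have h5 : (∫ r in Ioi (0:ℝ), (Ioo (0:ℝ) R).indicator (fun r => r * (R^2 - r^2)^(s-1)) r)
      = ∫ r in Ioo (0:ℝ) R, r * (R^2 - r^2)^(s-1) := by
    rw [setIntegral_indicator measurableSet_Ioo]
    congr 1
    rw [inter_eq_right.2 (Ioo_subset_Ioi_self)]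
  have h6 : (∫ θ in Ioo (-π) π, (1:ℝ)) = 2 * π := by
    simp [Real.volume_Ioo]
    rw [max_eq_left (by linarith [pi_pos])]
    ring
  have h7 := radial_integral R s hR hs
  rw [step1, ← step2, step3, step4, h5, h6, h7]
  field_simp


lemma Gamma_lb (a y : ℝ) (ha : 0 < a) (ha1 : a ≤ 1) (hy : 1 ≤ y) :
    Real.Gamma y * (y * (y+1)^(a-1)) ≤ Real.Gamma (y+a) := by
  have hy0 : 0 < y := by linarith
  have h2a : 0 < 2 - a := by linarith
  set d : ℝ := 1/(2-a) with hd_def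
  have hd : d * (2-a) = 1 := by rw [hd_def]; field_simp
  have hd0 : 0 ≤ d := by positivity
  have hconv := Real.convexOn_log_Gamma
  have ht1 : (0:ℝ) ≤ (1-a)*d := mul_nonneg (by linarith) hd0
  have hts : d + (1-a)*d = 1 := by linear_combination hd
  have hkey := hconv.2 (show y + a ∈ Ioi (0:ℝ) by simp; linarith)
    (show y + 2 ∈ Ioi (0:ℝ) by simp; linarith) hd0 ht1 hts
  have hcombo : d • (y+a) + ((1-a)*d) • (y+2) = y + 1 := by
    simp only [smul_eq_mul]; linear_combination (y+1) * hd
  rw [hcombo] at hkey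
  simp only [Function.comp_apply, smul_eq_mul] at hkey
  have hG1 : Real.Gamma (y+1) = y * Real.Gamma y := Real.Gamma_add_one hy0.ne'
  have hG2 : Real.Gamma (y+2) = (y+1) * (y * Real.Gamma y) := by
    have h12 : Real.Gamma (y+1+1) = (y+1) * Real.Gamma (y+1) :=
      Real.Gamma_add_one (by linarith)
    rw [show y+2 = y+1+1 by ring, h12, hG1]
  have hGpos : 0 < Real.Gamma y := Real.Gamma_pos_of_pos hy0
  have hL1 : Real.log (Real.Gamma (y+1)) = Real.log y + Real.log (Real.Gamma y) := by
    rw [hG1, Real.log_mul hy0.ne' hGpos.ne']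
  have hL2 : Real.log (Real.Gamma (y+2)) = Real.log (y+1) + (Real.log y + Real.log (Real.Gamma y)) := by
    rw [hG2, Real.log_mul (by linarith) (by positivity), Real.log_mul hy0.ne' hGpos.ne']
  rw [hL1, hL2] at hkey
  have hm := mul_le_mul_of_nonneg_left hkey h2a.le
  rw [mul_add (2-a) (d * Real.log (Real.Gamma (y+a)))] at hm
  have e1 : (2-a) * (d * Real.log (Real.Gamma (y+a))) = Real.log (Real.Gamma (y+a)) := by
    linear_combination Real.log (Real.Gamma (y+a)) * hd
  have e2 : (2-a) * ((1-a)*d * (Real.log (y+1) + (Real.log y + Real.log (Real.Gamma y))))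
      = (1-a) * (Real.log (y+1) + (Real.log y + Real.log (Real.Gamma y))) := by
    linear_combination (1-a) * (Real.log (y+1) + (Real.log y + Real.log (Real.Gamma y))) * hd
  rw [e1, e2] at hm
  have hT : Real.log (Real.Gamma y) + Real.log y + (a-1) * Real.log (y+1)
      ≤ Real.log (Real.Gamma (y+a)) := by linarith
  have hexp := Real.exp_le_exp.2 hT
  rw [Real.exp_log (Real.Gamma_pos_of_pos (by linarith : 0 < y + a))] at hexp
  calc Real.Gamma y * (y * (y+1)^(a-1))
      = Real.exp (Real.log (Real.Gamma y) + Real.log y + (a-1) * Real.log (y+1)) := by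
        rw [Real.exp_add, Real.exp_add, Real.exp_log hGpos, Real.exp_log hy0,
          Real.rpow_def_of_pos (by linarith : (0:ℝ) < y+1)]
        ring_nf
    _ ≤ Real.Gamma (y+a) := hexp

lemma summable_ml (a z : ℝ) (ha : 0 < a) (ha1 : a ≤ 1) (hz : 0 ≤ z) :
    Summable (fun k : ℕ => z^k / Real.Gamma (a*k+1)) := by
  apply summable_of_ratio_norm_eventually_le (r := 1/2) (by norm_num)
  have t1 : Filter.Tendsto (fun k : ℕ => a*(k:ℝ)+1) Filter.atTop Filter.atTop :=
    Filter.tendsto_atTop_add_const_right _ 1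
      (Filter.Tendsto.const_mul_atTop ha tendsto_natCast_atTop_atTop)
  have t2 := ((tendsto_rpow_atTop ha).comp t1).eventually_ge_atTop (4*z)
  filter_upwards [t2] with k hk
  simp only [Function.comp_apply] at hk
  set y : ℝ := a*(k:ℝ)+1 with hy_def
  have hy1 : 1 ≤ y := by
    have h0 : (0:ℝ) ≤ a*(k:ℝ) := by positivity
    simp only [hy_def]; linarith
  have hy0 : 0 < y := by linarith
  have hya : 0 < y ^ a := Real.rpow_pos_of_pos hy0 a
  have hGpos : 0 < Real.Gamma y := Real.Gamma_pos_of_pos hy0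
  have hGapos : 0 < Real.Gamma (y+a) := Real.Gamma_pos_of_pos (by linarith)
  have hlb : 1/2 * (Real.Gamma y * y ^ a) ≤ Real.Gamma (y+a) := by
    have h1 := Gamma_lb a y ha ha1 hy1
    have h2 : (2*y) ^ (a-1) ≤ (y+1) ^ (a-1) := by
      apply Real.rpow_le_rpow_of_nonpos (by linarith : (0:ℝ) < y+1) (by linarith) (by linarith)
    have h3 : ((2*y):ℝ) ^ (a-1) = 2^(a-1) * y^(a-1) := Real.mul_rpow (by norm_num) hy0.le
    have h4 : (1:ℝ)/2 ≤ (2:ℝ)^(a-1) := by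
      have h5 := Real.rpow_le_rpow_of_exponent_le (by norm_num : (1:ℝ) ≤ 2)
        (by linarith : (-1:ℝ) ≤ a-1)
      rwa [Real.rpow_neg_one, show ((2:ℝ))⁻¹ = 1/2 by norm_num] at h5
    have h5 : y * y^(a-1) = y^a := by
      rw [← Real.rpow_one_add' hy0.le (by intro h; nlinarith : 1 + (a-1) ≠ 0)]
      norm_num
    have hyam1 : 0 < y^(a-1) := Real.rpow_pos_of_pos hy0 _
    have h6 : 1/2 * y^a ≤ y * (y+1)^(a-1) := by
      calc 1/2 * y^a = 1/2 * (y * y^(a-1)) := by rw [h5]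
        _ ≤ 2^(a-1) * (y * y^(a-1)) := mul_le_mul_of_nonneg_right h4 (by positivity)
        _ = y * (2^(a-1) * y^(a-1)) := by ring
        _ = y * (2*y)^(a-1) := by rw [h3]
        _ ≤ y * (y+1)^(a-1) := mul_le_mul_of_nonneg_left h2 hy0.le
    nlinarith [mul_le_mul_of_nonneg_left h6 hGpos.le]
  have harg : a*((k:ℝ)+1)+1 = y + a := by rw [hy_def]; ring
  rw [Real.norm_eq_abs, Real.norm_eq_abs, abs_of_nonneg (by positivity),
    abs_of_nonneg (by positivity)]
  push_cast
  rw [harg]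
  calc z^(k+1) / Real.Gamma (y+a)
      ≤ (y^a/4 * z^k) / (1/2 * (Real.Gamma y * y^a)) := by
        apply div_le_div₀ (by positivity) ?_ (by positivity) hlb
        have hz4 : z ≤ y^a/4 := by linarith
        calc z^(k+1) = z * z^k := by ring
          _ ≤ y^a/4 * z^k := by nlinarith [pow_nonneg hz k]
    _ = 1/2 * (z^k / Real.Gamma y) := by
        field_simp
        ring

/-- Two-parameter Mittag-Leffler function `E_{a,b}(z) = ∑ z^k / Γ(ak+b)`. -/
noncomputable def ML (a b z : ℝ) : ℝ := ∑' k : ℕ, z ^ k / Real.Gamma (a * (k : ℝ) + b)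

theorem stmt13 (a lam c t : ℝ) (ha : 0 < a ∧ a ≤ 1) (hlam : 0 < lam) (hc : 0 < c)
    (ht : 0 < t) :
    (1 / (2 * π)) * (∑' k : ℕ, (lam / c ^ a) ^ (k + 1) / Real.Gamma (a * ((k : ℝ) + 1)) *
        ∫ p in {p : ℝ × ℝ | p.1 ^ 2 + p.2 ^ 2 < c ^ 2 * t ^ 2},
          (c ^ 2 * t ^ 2 - p.1 ^ 2 - p.2 ^ 2) ^ (a * ((k : ℝ) + 1) / 2 - 1))
      = ML a 1 (lam * t ^ a) - 1 ∧
    (1 / (2 * π)) * (∑' k : ℕ, (lam / c ^ a) ^ (k + 1) / Real.Gamma (a * ((k : ℝ) + 1)) *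
        ∫ p in {p : ℝ × ℝ | p.1 ^ 2 + p.2 ^ 2 < c ^ 2 * t ^ 2},
          (c ^ 2 * t ^ 2 - p.1 ^ 2 - p.2 ^ 2) ^ (a * ((k : ℝ) + 1) / 2 - 1))
        / ML a 1 (lam * t ^ a)
      = 1 - 1 / ML a 1 (lam * t ^ a) := by
  obtain ⟨ha0, ha1⟩ := ha
  set g : ℕ → ℝ := fun n => (lam * t ^ a) ^ n / Real.Gamma (a * (n : ℝ) + 1) with hg_def
  have hsum : Summable g := summable_ml a (lam * t ^ a) ha0 ha1
    (by positivity)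
  have hg0 : g 0 = 1 := by
    simp [hg_def, Real.Gamma_one]
  have hMLg : ML a 1 (lam * t ^ a) = ∑' n, g n := rfl
  have hMLpos : 0 < ML a 1 (lam * t ^ a) := by
    rw [hMLg]
    refine Summable.tsum_pos hsum (fun i => by
      have := Real.Gamma_pos_of_pos (show (0:ℝ) < a * (i:ℝ) + 1 by positivity)
      positivity) 0 (by rw [hg0]; norm_num)
  -- termwise computation
  have hterm : ∀ k : ℕ, (lam / c ^ a) ^ (k + 1) / Real.Gamma (a * ((k : ℝ) + 1)) *
      (∫ p in {p : ℝ × ℝ | p.1 ^ 2 + p.2 ^ 2 < c ^ 2 * t ^ 2},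
        (c ^ 2 * t ^ 2 - p.1 ^ 2 - p.2 ^ 2) ^ (a * ((k : ℝ) + 1) / 2 - 1))
      = (2 * π) * g (k + 1) := by
    intro k
    set b : ℝ := a * ((k : ℝ) + 1) with hb_def
    have hb : 0 < b := by positivity
    have hint : (∫ p in {p : ℝ × ℝ | p.1 ^ 2 + p.2 ^ 2 < c ^ 2 * t ^ 2},
        (c ^ 2 * t ^ 2 - p.1 ^ 2 - p.2 ^ 2) ^ (b / 2 - 1))
        = π * (c ^ 2 * t ^ 2) ^ (b / 2) / (b / 2) := by
      have h := disc_integral (c * t) (b / 2) (by positivity) (by positivity)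
      rw [show ((c * t) ^ 2 : ℝ) = c ^ 2 * t ^ 2 from mul_pow c t 2] at h
      exact h
    rw [hint]
    have hct : ((c ^ 2 * t ^ 2 : ℝ)) ^ (b / 2) = c ^ b * t ^ b := by
      rw [show (c ^ 2 * t ^ 2 : ℝ) = (c * t) ^ 2 by ring]
      rw [← Real.rpow_natCast (c * t) 2, ← Real.rpow_mul (by positivity)]
      rw [show ((2 : ℕ) : ℝ) * (b / 2) = b by push_cast; ring]
      exact Real.mul_rpow hc.le ht.le
    have hcb : ((c ^ a : ℝ)) ^ (k + 1) = c ^ b := by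
      rw [← Real.rpow_natCast (c ^ a) (k + 1), ← Real.rpow_mul hc.le, hb_def]
      push_cast
      ring_nf
    have htb : (t ^ b : ℝ) = (t ^ a) ^ (k + 1) := by
      rw [← Real.rpow_natCast (t ^ a) (k + 1), ← Real.rpow_mul ht.le, hb_def]
      push_cast
      ring_nf
    have hΓ : Real.Gamma (b + 1) = b * Real.Gamma b := Real.Gamma_add_one hb.ne'
    have hgk : g (k + 1) = (lam ^ (k+1) * (t ^ a) ^ (k+1)) / (b * Real.Gamma b) := by
      rw [hg_def]
      simp only
      rw [mul_pow, ← hΓ]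
      congr 2
      push_cast [hb_def]
      ring
    rw [hct, hgk, div_pow, hcb, htb]
    have hΓb : 0 < Real.Gamma b := Real.Gamma_pos_of_pos hb
    have hcbpos : 0 < c ^ b := Real.rpow_pos_of_pos hc b
    field_simp
  have hcast : ∀ k : ℕ, (2 * π) * g (k + 1)
      = (2 * π) * ((fun n => g n) (k + 1)) := fun k => rfl
  have hsplit : ∑' n, g n = g 0 + ∑' k, g (k + 1) := Summable.tsum_eq_zero_add hsum
  have htsum : (∑' k : ℕ, (lam / c ^ a) ^ (k + 1) / Real.Gamma (a * ((k : ℝ) + 1)) *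
      ∫ p in {p : ℝ × ℝ | p.1 ^ 2 + p.2 ^ 2 < c ^ 2 * t ^ 2},
        (c ^ 2 * t ^ 2 - p.1 ^ 2 - p.2 ^ 2) ^ (a * ((k : ℝ) + 1) / 2 - 1))
      = (2 * π) * ∑' k, g (k + 1) := by
    rw [← tsum_mul_left]
    exact tsum_congr hterm
  have hpart1 : (1 / (2 * π)) * (∑' k : ℕ, (lam / c ^ a) ^ (k + 1) /
      Real.Gamma (a * ((k : ℝ) + 1)) *
      ∫ p in {p : ℝ × ℝ | p.1 ^ 2 + p.2 ^ 2 < c ^ 2 * t ^ 2},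
        (c ^ 2 * t ^ 2 - p.1 ^ 2 - p.2 ^ 2) ^ (a * ((k : ℝ) + 1) / 2 - 1))
      = ML a 1 (lam * t ^ a) - 1 := by
    rw [htsum, hMLg, hsplit, hg0]
    have hpi : (2 * π) ≠ 0 := by positivity
    field_simp
    ring
  refine ⟨hpart1, ?_⟩
  rw [hpart1]
  field_simp
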